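/- For every n ≥ 1 and k ≥ 0, the n×n integer matrix with entries (C(k+j, i) mod 2) for 0 ≤ i, j < n has determinant ±1. -/

import Mathlib

open Matrix

private def MM (n k : ℕ) : Matrix (Fin n) (Fin n) ℤ :=
  fun i j : Fin n => ((Nat.choose (k + (j : ℕ)) (i : ℕ) % 2 : ℕ) : ℤ)

private lemma lucas2 (x y u v : ℕ) (hu : u < 2) (hv : v < 2) :
    Nat.choose (2 * x + u) (2 * y + v) % 2 = Nat.choose u v * Nat.choose x y % 2 := by
  haveI : Fact (Nat.Prime 2) := ⟨Nat.prime_two⟩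
  have h := @Choose.choose_modEq_choose_mod_mul_choose_div_nat (2 * x + u) (2 * y + v) 2 _
  have h1 : (2 * x + u) % 2 = u := by omega
  have h2 : (2 * x + u) / 2 = x := by omega
  have h3 : (2 * y + v) % 2 = v := by omega
  have h4 : (2 * y + v) / 2 = y := by omega
  rw [Nat.ModEq, h1, h2, h3, h4] at h
  exact h

private lemma lucasA (x y : ℕ) : Nat.choose (2 * x) (2 * y) % 2 = Nat.choose x y % 2 := by
  simpa using lucas2 x y 0 0 (by omega) (by omega)

private lemma lucasB (x y : ℕ) : Nat.choose (2 * x) (2 * y + 1) % 2 = 0 := by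
  simpa [Nat.choose_one_right] using lucas2 x y 0 1 (by omega) (by omega)

private lemma lucasC (x y : ℕ) : Nat.choose (2 * x + 1) (2 * y) % 2 = Nat.choose x y % 2 := by
  simpa using lucas2 x y 1 0 (by omega) (by omega)

private lemma lucasD (x y : ℕ) : Nat.choose (2 * x + 1) (2 * y + 1) % 2 = Nat.choose x y % 2 := by
  simpa using lucas2 x y 1 1 (by omega) (by omega)

private def esplit (n : ℕ) : (Fin ((n + 1) / 2) ⊕ Fin (n / 2)) ≃ Fin n where
  toFun x := match x with
    | .inl a => ⟨2 * a, by have := a.isLt; omega⟩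
    | .inr a => ⟨2 * a + 1, by have := a.isLt; omega⟩
  invFun i :=
    if h : (i : ℕ) % 2 = 0 then .inl ⟨(i : ℕ) / 2, by have := i.isLt; omega⟩
    else .inr ⟨(i : ℕ) / 2, by have := i.isLt; omega⟩
  left_inv := by
    rintro (a | a)
    · dsimp only
      rw [dif_pos (by omega)]
      congr 1
      rw [Fin.ext_iff]
      dsimp only
      omega
    · dsimp only
      rw [dif_neg (by omega)]
      congr 1
      rw [Fin.ext_iff]
      dsimp only
      omega
  right_inv := by
    intro i
    dsimp only
    by_cases h : (i : ℕ) % 2 = 0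
    · rw [dif_pos h]
      rw [Fin.ext_iff]
      dsimp only
      omega
    · rw [dif_neg h]
      rw [Fin.ext_iff]
      dsimp only
      omega

private lemma idSubmatrixMul {m₁ m₂ p : ℕ} (f : Fin m₂ → Fin m₁)
    (X : Matrix (Fin m₁) (Fin p) ℤ) :
    ((1 : Matrix (Fin m₁) (Fin m₁) ℤ).submatrix f id) * X = X.submatrix f id := by
  ext a b
  simp [Matrix.mul_apply, Matrix.one_apply]

private lemma key (n : ℕ) : ∀ k : ℕ, IsUnit (MM n k).det := by
  induction n using Nat.strong_induction_on with
  | _ n ih =>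
  intro k
  match n with
  | 0 => simp [Matrix.det_isEmpty]
  | 1 =>
      have : (MM 1 k).det = 1 := by
        rw [Matrix.det_fin_one]
        simp [MM]
      rw [this]; exact isUnit_one
  | (m + 2) =>
  set n := m + 2 with hn
  set m₁ := (n + 1) / 2 with hm₁
  set m₂ := n / 2 with hm₂
  have hm₁n : m₁ < n := by omega
  have hm₂n : m₂ < n := by omega
  have hdet : (MM n k).det = ((MM n k).submatrix (esplit n) (esplit n)).det :=
    (Matrix.det_submatrix_equiv_self (esplit n) (MM n k)).symm
  rcases Nat.even_or_odd k with ⟨k', hk⟩ | ⟨k', hk⟩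
  · -- k = 2 * k'
    have hblocks : (MM n k).submatrix (esplit n) (esplit n) =
        Matrix.fromBlocks (MM m₁ k')
          (Matrix.of fun (a : Fin m₁) (b : Fin m₂) => ((Nat.choose (k' + (b : ℕ)) (a : ℕ) % 2 : ℕ) : ℤ))
          0 (MM m₂ k') := by
      ext i j
      rcases i with a | a <;> rcases j with b | b <;>
        simp only [Matrix.submatrix_apply, Matrix.fromBlocks_apply₁₁,
          Matrix.fromBlocks_apply₁₂, Matrix.fromBlocks_apply₂₁, Matrix.fromBlocks_apply₂₂,
          esplit, Equiv.coe_fn_mk, MM, Matrix.zero_apply, Matrix.of_apply]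
      · rw [show k + 2 * (b : ℕ) = 2 * (k' + (b : ℕ)) by omega, lucasA]
      · rw [show k + (2 * (b : ℕ) + 1) = 2 * (k' + (b : ℕ)) + 1 by omega, lucasC]
      · rw [show k + 2 * (b : ℕ) = 2 * (k' + (b : ℕ)) by omega, lucasB]
        norm_num
      · rw [show k + (2 * (b : ℕ) + 1) = 2 * (k' + (b : ℕ)) + 1 by omega, lucasD]
    rw [hdet, hblocks, Matrix.det_fromBlocks_zero₂₁]
    exact (ih m₁ hm₁n k').mul (ih m₂ hm₂n k')
  · -- k = 2 * k' + 1
    have hm21 : m₂ ≤ m₁ := by omega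
    set f : Fin m₂ → Fin m₁ := Fin.castLE hm21 with hf
    set B : Matrix (Fin m₁) (Fin m₁) ℤ := MM m₁ k' with hB
    set C : Matrix (Fin m₁) (Fin m₂) ℤ :=
      Matrix.of fun a b => ((Nat.choose (k' + 1 + (b : ℕ)) (a : ℕ) % 2 : ℕ) : ℤ) with hC
    set J : Matrix (Fin m₂) (Fin m₁) ℤ :=
      (1 : Matrix (Fin m₁) (Fin m₁) ℤ).submatrix f id with hJ
    have hblocks : (MM n k).submatrix (esplit n) (esplit n) =
        Matrix.fromBlocks B C (B.submatrix f id) 0 := by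
      ext i j
      rcases i with a | a <;> rcases j with b | b <;>
        simp only [Matrix.submatrix_apply, Matrix.fromBlocks_apply₁₁,
          Matrix.fromBlocks_apply₁₂, Matrix.fromBlocks_apply₂₁, Matrix.fromBlocks_apply₂₂,
          esplit, Equiv.coe_fn_mk, MM, Matrix.zero_apply, hB, hC, hf, id_eq, Fin.coe_castLE, Matrix.of_apply]
      · rw [show k + 2 * (b : ℕ) = 2 * (k' + (b : ℕ)) + 1 by omega, lucasC]
      · rw [show k + (2 * (b : ℕ) + 1) = 2 * (k' + 1 + (b : ℕ)) by omega, lucasA]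
      · rw [show k + 2 * (b : ℕ) = 2 * (k' + (b : ℕ)) + 1 by omega, lucasD]
      · rw [show k + (2 * (b : ℕ) + 1) = 2 * (k' + 1 + (b : ℕ)) by omega, lucasB]
        norm_num
    have hJB : J * B = B.submatrix f id := idSubmatrixMul f B
    have hJC : J * C = MM m₂ (k' + 1) := by
      rw [idSubmatrixMul f C]
      ext a b
      simp [MM, hC, hf]
    have hmul : Matrix.fromBlocks (1 : Matrix (Fin m₁) (Fin m₁) ℤ) 0 (-J)
          (1 : Matrix (Fin m₂) (Fin m₂) ℤ) * Matrix.fromBlocks B C (B.submatrix f id) 0 =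
        Matrix.fromBlocks B C 0 (-(MM m₂ (k' + 1))) := by
      simp only [Matrix.fromBlocks_multiply, Matrix.one_mul, Matrix.zero_mul,
        Matrix.mul_zero, add_zero, zero_add, Matrix.neg_mul, hJB, hJC, neg_add_cancel]
    have hdetP : (Matrix.fromBlocks (1 : Matrix (Fin m₁) (Fin m₁) ℤ) 0 (-J)
        (1 : Matrix (Fin m₂) (Fin m₂) ℤ)).det = 1 := by
      rw [Matrix.det_fromBlocks_zero₁₂, Matrix.det_one, Matrix.det_one, one_mul]
    have hd := congrArg Matrix.det hmul
    rw [Matrix.det_mul, hdetP, one_mul] at hd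
    rw [hdet, hblocks, hd, Matrix.det_fromBlocks_zero₂₁, Matrix.det_neg, Fintype.card_fin]
    exact ((ih m₁ hm₁n k').mul (((isUnit_one.neg).pow m₂).mul (ih m₂ hm₂n (k' + 1))))

theorem det_M1_shifted_pm_one (n k : ℕ) (hn : 1 ≤ n) :
    Matrix.det (fun i j : Fin n => ((Nat.choose (k + (j : ℕ)) (i : ℕ) % 2 : ℕ) : ℤ)) = 1 ∨
    Matrix.det (fun i j : Fin n => ((Nat.choose (k + (j : ℕ)) (i : ℕ) % 2 : ℕ) : ℤ)) = -1 := by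
  exact Int.isUnit_iff.mp (key n k)
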